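/- Let A be a divided power algebra over a field of characteristic p > 0 and let M be a divided power A-module with p-map π. Then the vector space A ⊕ M with multiplication (a,m)*(b,n) = (a*b, a·n + b·m) and p-th divided power (a,m)^[p] = (a^[p], π(m) − a^{p−1}·m) is a divided power algebra. -/

import Mathlib

open scoped TensorProduct

/-- Iterated product with respect to a bilinear multiplication:
`mpow mul a n = a^{*(n+1)}` (so `mpow mul a 0 = a`). -/
def mpow {F : Type} [Field F] {A : Type} [AddCommGroup A] [Module F A]
    (mul : A →ₗ[F] A →ₗ[F] A) (a : A) : ℕ → A
  | 0 => a
  | n + 1 => mul (mpow mul a n) a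

/-- A (non-unital) divided power algebra over a field `F` of characteristic `p`,
in Soublin's presentation: a commutative associative `F`-algebra together with a
`p`-th divided power operation satisfying `a^{*p} = 0`,
`(a+b)^[p] = a^[p] + b^[p] + ∑_{i=1}^{p-1} ((-1)^i/i) a^{*i} * b^{*(p-i)}`
and `(a*b)^[p] = 0`. -/
structure DPAlg (p : ℕ) (F : Type) [Field F] (A : Type) [AddCommGroup A] [Module F A] where
  mul : A →ₗ[F] A →ₗ[F] A
  mul_comm : ∀ a b, mul a b = mul b a
  mul_assoc : ∀ a b c, mul (mul a b) c = mul a (mul b c)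
  dpow : A → A
  dpow_smul : ∀ (c : F) (a : A), dpow (c • a) = c ^ p • dpow a
  pow_p : ∀ a, mpow mul a (p - 1) = 0
  dpow_add : ∀ a b, dpow (a + b) = dpow a + dpow b +
      ∑ i ∈ Finset.Ioo 0 p, ((-1 : F) ^ i * (i : F)⁻¹) •
        mul (mpow mul a (i - 1)) (mpow mul b (p - i - 1))
  dpow_mul : ∀ a b, dpow (mul a b) = 0

/-- Morphisms of divided power algebras. -/
structure DPHom {p : ℕ} {F : Type} [Field F] {A B : Type}
    [AddCommGroup A] [Module F A] [AddCommGroup B] [Module F B]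
    (S : DPAlg p F A) (T : DPAlg p F B) where
  toFun : A →ₗ[F] B
  map_mul : ∀ a b, toFun (S.mul a b) = T.mul (toFun a) (toFun b)
  map_dpow : ∀ a, toFun (S.dpow a) = T.dpow (toFun a)

/-- A divided power module over a divided power algebra `A`: a module over the
underlying (non-unital) commutative algebra `U(A)` together with a `p`-map `π`. -/
structure DPMod (p : ℕ) {F : Type} [Field F] {A : Type} [AddCommGroup A] [Module F A]
    (S : DPAlg p F A) (M : Type) [AddCommGroup M] [Module F M] where
  smul : A →ₗ[F] M →ₗ[F] M
  mul_smul : ∀ a b m, smul (S.mul a b) m = smul a (smul b m)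
  pmap : M → M
  pmap_add : ∀ m m', pmap (m + m') = pmap m + pmap m'
  pmap_smul : ∀ (c : F) m, pmap (c • m) = c ^ p • pmap m
  pmap_asmul : ∀ (a : A) (m : M), pmap (smul a m) = 0

section Aux

variable {p : ℕ} {F : Type} [Field F] {A M : Type}
  [AddCommGroup A] [Module F A] [AddCommGroup M] [Module F M]

theorem mpow_smul (mul : A →ₗ[F] A →ₗ[F] A) (c : F) (a : A) (n : ℕ) :
    mpow mul (c • a) n = c ^ (n + 1) • mpow mul a n := by
  induction n with
  | zero => simp [mpow]
  | succ n ih =>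
      simp only [mpow, ih, map_smul, LinearMap.smul_apply, smul_smul]
      rw [← pow_succ']

variable (S : DPAlg p F A) (Mo : DPMod p S M)

theorem mpow_mulS (a b : A) (k : ℕ) :
    mpow S.mul (S.mul a b) k = S.mul (mpow S.mul a k) (mpow S.mul b k) := by
  induction k with
  | zero => rfl
  | succ k ih =>
      simp only [mpow, ih]
      rw [S.mul_assoc, S.mul_comm (mpow S.mul b k), S.mul_assoc,
        ← S.mul_assoc (mpow S.mul a k), S.mul_comm _ a, ← S.mul_assoc, ← S.mul_assoc,
        S.mul_assoc _ b, S.mul_comm b, ← S.mul_assoc]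

/-- `act a n m = a^{*n} · m`, with `act a 0 m = m`. -/
def act (a : A) : ℕ → M → M
  | 0, m => m
  | n + 1, m => Mo.smul (mpow S.mul a n) m

theorem smul_smul_comm (x y : A) (m : M) :
    Mo.smul x (Mo.smul y m) = Mo.smul y (Mo.smul x m) := by
  rw [← Mo.mul_smul, ← Mo.mul_smul, S.mul_comm]

theorem act_succ (a : A) (n : ℕ) (m : M) :
    act S Mo a (n + 1) m = Mo.smul a (act S Mo a n m) := by
  cases n with
  | zero => rfl
  | succ n =>
      show Mo.smul (S.mul (mpow S.mul a n) a) m = Mo.smul a (Mo.smul (mpow S.mul a n) m)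
      rw [Mo.mul_smul, smul_smul_comm]

theorem act_add (a : A) (n : ℕ) (m m' : M) :
    act S Mo a n (m + m') = act S Mo a n m + act S Mo a n m' := by
  cases n with
  | zero => rfl
  | succ n => exact map_add _ _ _

theorem act_nsmul (a : A) (n k : ℕ) (m : M) :
    act S Mo a n (k • m) = k • act S Mo a n m := by
  cases n with
  | zero => rfl
  | succ n => exact map_nsmul ((Mo.smul (mpow S.mul a n))) k m

theorem act_fsmul (a : A) (n : ℕ) (c : F) (m : M) :
    act S Mo a n (c • m) = c • act S Mo a n m := by
  cases n with
  | zero => rfl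
  | succ n => exact map_smul ((Mo.smul (mpow S.mul a n))) c m

theorem smul_act_comm (b a : A) (n : ℕ) (m : M) :
    Mo.smul b (act S Mo a n m) = act S Mo a n (Mo.smul b m) := by
  cases n with
  | zero => rfl
  | succ n => exact smul_smul_comm S Mo _ _ _

theorem act_act_comm (a b : A) (j l : ℕ) (m : M) :
    act S Mo b l (act S Mo a j m) = act S Mo a j (act S Mo b l m) := by
  cases l with
  | zero => rfl
  | succ l => exact smul_act_comm S Mo _ _ _ _


theorem act_binomial (a b : A) (k : ℕ) (m : M) :
    act S Mo (a + b) k m =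
      ∑ j ∈ Finset.range (k + 1), (k.choose j) • act S Mo a j (act S Mo b (k - j) m) := by
  induction k with
  | zero => simp [act]
  | succ k ih =>
      have key : act S Mo (a + b) (k + 1) m
          = Mo.smul a (act S Mo (a + b) k m) + Mo.smul b (act S Mo (a + b) k m) := by
        rw [act_succ, ← LinearMap.add_apply, ← map_add]
      rw [key, ih, map_sum, map_sum]
      have ha : ∀ j ∈ Finset.range (k + 1),
          Mo.smul a ((k.choose j) • act S Mo a j (act S Mo b (k - j) m))
            = (k.choose j) • act S Mo a (j + 1) (act S Mo b (k - j) m) := by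
        intro j _
        rw [map_nsmul, ← act_succ]
      have hb : ∀ j ∈ Finset.range (k + 1),
          Mo.smul b ((k.choose j) • act S Mo a j (act S Mo b (k - j) m))
            = (k.choose j) • act S Mo a j (act S Mo b (k + 1 - j) m) := by
        intro j hj
        rw [map_nsmul, smul_act_comm]
        congr 2
        have hjk : j ≤ k := Nat.lt_succ_iff.mp (Finset.mem_range.mp hj)
        have : k + 1 - j = (k - j) + 1 := by omega
        rw [this, act_succ]
      rw [Finset.sum_congr rfl ha, Finset.sum_congr rfl hb]
      rw [Finset.sum_range_succ' (fun j => ((k+1).choose j) • act S Mo a j (act S Mo b (k + 1 - j) m)) (k+1)]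
      have hred : ∀ j ∈ Finset.range (k + 1),
          ((k+1).choose (j+1)) • act S Mo a (j+1) (act S Mo b (k + 1 - (j+1)) m)
            = (k.choose j) • act S Mo a (j+1) (act S Mo b (k - j) m)
              + (k.choose (j+1)) • act S Mo a (j+1) (act S Mo b (k - j) m) := by
        intro j _
        have h1 : k + 1 - (j + 1) = k - j := by omega
        rw [h1, Nat.choose_succ_succ, add_nsmul]
      rw [Finset.sum_congr rfl hred, Finset.sum_add_distrib]
      have hlast : ∑ j ∈ Finset.range (k + 1),
          (k.choose (j+1)) • act S Mo a (j+1) (act S Mo b (k - j) m)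
            + ((k+1).choose 0) • act S Mo a 0 (act S Mo b (k + 1 - 0) m)
          = ∑ j ∈ Finset.range (k + 1),
            (k.choose j) • act S Mo a j (act S Mo b (k + 1 - j) m) := by
        rw [Finset.sum_range_succ' (fun j => (k.choose j) • act S Mo a j (act S Mo b (k + 1 - j) m)) k]
        congr 1
        · rw [Finset.sum_range_succ, Nat.choose_succ_self]
          simp only [zero_smul, add_zero]
          refine Finset.sum_congr rfl fun j hj => ?_
          have : k + 1 - (j + 1) = k - j := by omega
          rw [this]
        · simp
      rw [add_assoc, hlast]


theorem cast_choose_neg_one [CharP F p] (hp : p.Prime) :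
    ∀ j, j < p → (((p - 1).choose j : ℕ) : F) = (-1 : F) ^ j := by
  intro j
  induction j with
  | zero => simp
  | succ j ih =>
      intro hj
      have hjp : j < p := Nat.lt_of_succ_lt hj
      have h0 : ((p.choose (j + 1) : ℕ) : F) = 0 :=
        (CharP.cast_eq_zero_iff F p _).2 (hp.dvd_choose_self (Nat.succ_ne_zero j) hj)
      have hpas : p.choose (j + 1) = (p - 1).choose j + (p - 1).choose (j + 1) := by
        conv_lhs => rw [show p = (p - 1) + 1 by omega]
        rw [Nat.choose_succ_succ]
      rw [hpas, Nat.cast_add, ih hjp] at h0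
      have : (((p - 1).choose (j + 1) : ℕ) : F) = -(-1 : F) ^ j := by linear_combination h0
      rw [this, pow_succ]
      ring

theorem neg_one_pow_pred [CharP F p] (hp : p.Prime) : (-1 : F) ^ (p - 1) = 1 := by
  rcases hp.eq_two_or_odd' with h2 | hodd
  · subst h2
    rw [show (2:ℕ) - 1 = 1 by rfl, pow_one, CharTwo.neg_eq]
  · exact Even.neg_one_pow (Nat.Odd.sub_odd hodd odd_one)

/-- The semidirect product multiplication on `A × M` as a bilinear map. -/
def bmulT : (A × M) →ₗ[F] (A × M) →ₗ[F] (A × M) :=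
  LinearMap.mk₂ F (fun x y => (S.mul x.1 y.1, Mo.smul x.1 y.2 + Mo.smul y.1 x.2))
    (by
      intro x x' y
      simp only [Prod.fst_add, Prod.snd_add, map_add, LinearMap.add_apply, Prod.mk_add_mk]
      exact Prod.ext rfl (by abel))
    (by
      intro c x y
      simp only [Prod.smul_fst, Prod.smul_snd, map_smul, LinearMap.smul_apply, Prod.smul_mk]
      exact Prod.ext rfl (smul_add c _ _).symm)
    (by
      intro x y y'
      simp only [Prod.fst_add, Prod.snd_add, map_add, LinearMap.add_apply, Prod.mk_add_mk]
      exact Prod.ext rfl (by abel))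
    (by
      intro c x y
      simp only [Prod.smul_fst, Prod.smul_snd, map_smul, LinearMap.smul_apply, Prod.smul_mk]
      exact Prod.ext rfl (smul_add c _ _).symm)

theorem bmulT_apply (a b : A) (m n : M) :
    bmulT S Mo (a, m) (b, n) = (S.mul a b, Mo.smul a n + Mo.smul b m) := rfl

theorem mpow_bmulT (x : A × M) (n : ℕ) :
    mpow (bmulT S Mo) x n = (mpow S.mul x.1 n, (n + 1) • act S Mo x.1 n x.2) := by
  induction n with
  | zero => simp [mpow, act]
  | succ n ih =>
      obtain ⟨a, m⟩ := x
      rw [show mpow (bmulT S Mo) (a, m) (n+1) = bmulT S Mo (mpow (bmulT S Mo) (a,m) n) (a,m) from rfl,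
        ih]
      rw [bmulT_apply]
      refine Prod.ext rfl ?_
      show act S Mo a (n + 1) m + Mo.smul a ((n + 1) • act S Mo a n m)
          = (n + 1 + 1) • act S Mo a (n + 1) m
      rw [map_nsmul, ← act_succ, add_comm, ← succ_nsmul]


theorem sum_mk {ι : Type} (s : Finset ι) (f : ι → A) (g : ι → M) :
    ∑ i ∈ s, ((f i, g i) : A × M) = (∑ i ∈ s, f i, ∑ i ∈ s, g i) := by
  induction s using Finset.cons_induction with
  | empty => simp; rfl
  | cons a s ha ih => simp [Finset.sum_cons, ih]

end Aux

/-- Let `A` be a divided power algebra over a field of characteristic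
`p > 0` and `M` a divided power `A`-module with `p`-map `π`.  Then `A ⊕ M` with
multiplication `(a,m)*(b,n) = (a*b, a·n + b·m)` and `p`-th divided power
`(a,m)^[p] = (a^[p], π(m) - a^{p-1}·m)` is a divided power algebra. -/
theorem semidirect_product_isDPAlg
    (p : ℕ) (hp : p.Prime) (F : Type) [Field F] [CharP F p]
    (A M : Type) [AddCommGroup A] [Module F A] [AddCommGroup M] [Module F M]
    (S : DPAlg p F A) (Mo : DPMod p S M) :
    ∃ T : DPAlg p F (A × M),
      (∀ (a b : A) (m n : M),
        T.mul (a, m) (b, n) = (S.mul a b, Mo.smul a n + Mo.smul b m)) ∧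
      (∀ (a : A) (m : M),
        T.dpow (a, m) = (S.dpow a, Mo.pmap m - Mo.smul (mpow S.mul a (p - 2)) m)) := by
  have hp2 : 2 ≤ p := hp.two_le
  have hpred : p - 1 = (p - 2) + 1 := by omega
  refine ⟨{ mul := bmulT S Mo
            mul_comm := ?_
            mul_assoc := ?_
            dpow := fun x => (S.dpow x.1, Mo.pmap x.2 - Mo.smul (mpow S.mul x.1 (p - 2)) x.2)
            dpow_smul := ?_
            pow_p := ?_
            dpow_add := ?_
            dpow_mul := ?_ }, fun a b m n => rfl, fun a m => rfl⟩
  · -- mul_comm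
    intro x y
    obtain ⟨a, m⟩ := x; obtain ⟨b, n⟩ := y
    rw [bmulT_apply, bmulT_apply]
    exact Prod.ext (S.mul_comm a b) (add_comm _ _)
  · -- mul_assoc
    intro x y z
    obtain ⟨a, m⟩ := x; obtain ⟨b, n⟩ := y; obtain ⟨c, k⟩ := z
    rw [bmulT_apply, bmulT_apply, bmulT_apply, bmulT_apply]
    refine Prod.ext (S.mul_assoc a b c) ?_
    show Mo.smul (S.mul a b) k + Mo.smul c (Mo.smul a n + Mo.smul b m)
        = Mo.smul a (Mo.smul b k + Mo.smul c n) + Mo.smul (S.mul b c) m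
    rw [map_add, map_add, Mo.mul_smul, Mo.mul_smul, smul_smul_comm S Mo c a,
      smul_smul_comm S Mo c b]
    abel
  · -- dpow_smul
    intro c x
    obtain ⟨a, m⟩ := x
    show (S.dpow (c • a), Mo.pmap (c • m) - Mo.smul (mpow S.mul (c • a) (p - 2)) (c • m))
        = c ^ p • ((S.dpow a, Mo.pmap m - Mo.smul (mpow S.mul a (p - 2)) m) : A × M)
    rw [Prod.smul_mk]
    refine Prod.ext (S.dpow_smul c a) ?_
    show Mo.pmap (c • m) - Mo.smul (mpow S.mul (c • a) (p - 2)) (c • m)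
        = c ^ p • (Mo.pmap m - Mo.smul (mpow S.mul a (p - 2)) m)
    rw [Mo.pmap_smul, mpow_smul, LinearMap.map_smul₂, map_smul,
      smul_smul, ← pow_succ, show p - 2 + 1 + 1 = p by omega, smul_sub]
  · -- pow_p
    intro x
    rw [mpow_bmulT]
    refine Prod.ext (S.pow_p x.1) ?_
    show (p - 1 + 1) • act S Mo x.1 (p - 1) x.2 = (0 : A × M).2
    rw [show p - 1 + 1 = p by omega, ← Nat.cast_smul_eq_nsmul F, CharP.cast_eq_zero F p,
      zero_smul]
    rfl
  · -- dpow_add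
    intro x y
    obtain ⟨a, m⟩ := x; obtain ⟨b, n⟩ := y
    have hterm : ∀ i ∈ Finset.Ioo 0 p,
        ((-1 : F) ^ i * (i : F)⁻¹) •
          (bmulT S Mo) (mpow (bmulT S Mo) (a, m) (i - 1)) (mpow (bmulT S Mo) (b, n) (p - i - 1))
        = (((-1 : F) ^ i * (i : F)⁻¹) •
              S.mul (mpow S.mul a (i - 1)) (mpow S.mul b (p - i - 1)),
            (-1 : F) ^ (i + 1) • act S Mo a i (act S Mo b (p - 1 - i) n)
              + (-1 : F) ^ i • act S Mo a (i - 1) (act S Mo b (p - 1 - (i - 1)) m)) := by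
      intro i hi
      obtain ⟨hi0, hip⟩ := Finset.mem_Ioo.mp hi
      obtain ⟨j, rfl⟩ : ∃ j, i = j + 1 := ⟨i - 1, by omega⟩
      have hiF : ((j + 1 : ℕ) : F) ≠ 0 := by
        rw [Ne, CharP.cast_eq_zero_iff F p]
        exact Nat.not_dvd_of_pos_of_lt hi0 hip
      rw [mpow_bmulT, mpow_bmulT, bmulT_apply, Prod.smul_mk]
      refine Prod.ext rfl ?_
      have e1 : p - (j + 1) - 1 + 1 = p - j - 1 := by omega
      have e2 : p - 1 - (j + 1) = p - (j + 1) - 1 := by omega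
      simp only [Nat.add_sub_cancel]
      rw [map_nsmul, map_nsmul, e1]
      have hA : Mo.smul (mpow S.mul a j) (act S Mo b (p - (j + 1) - 1) n)
          = act S Mo a (j + 1) (act S Mo b (p - 1 - (j + 1)) n) := by
        rw [e2]; rfl
      have hB : Mo.smul (mpow S.mul b (p - (j + 1) - 1)) (act S Mo a j m)
          = act S Mo a j (act S Mo b (p - 1 - j) m) := by
        rw [show p - 1 - j = (p - (j + 1) - 1) + 1 by omega]
        exact act_act_comm S Mo a b j ((p - (j + 1) - 1) + 1) m
      rw [hA, hB, smul_add, ← Nat.cast_smul_eq_nsmul F (p - j - 1),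
        ← Nat.cast_smul_eq_nsmul F (j + 1), smul_smul, smul_smul]
      have hcast : ((p - j - 1 : ℕ) : F) = -((j + 1 : ℕ) : F) := by
        have h2 : ((p - j - 1 : ℕ) : F) + ((j + 1 : ℕ) : F) = 0 := by
          rw [← Nat.cast_add, show p - j - 1 + (j + 1) = p by omega, CharP.cast_eq_zero F p]
        linear_combination h2
      have hc1 : ((-1 : F) ^ (j + 1) * ((j + 1 : ℕ) : F)⁻¹) * ((p - j - 1 : ℕ) : F)
          = (-1 : F) ^ (j + 1 + 1) := by
        rw [hcast, mul_neg, mul_assoc, inv_mul_cancel₀ hiF, mul_one,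
          pow_succ (-1 : F) (j + 1), mul_neg_one]
      have hc2 : ((-1 : F) ^ (j + 1) * ((j + 1 : ℕ) : F)⁻¹) * ((j + 1 : ℕ) : F)
          = (-1 : F) ^ (j + 1) := by
        rw [mul_assoc, inv_mul_cancel₀ hiF, mul_one]
      rw [hc1, hc2]
    rw [Finset.sum_congr rfl hterm, sum_mk]
    have hma : Mo.smul (mpow S.mul a (p - 2)) m = act S Mo a (p - 1) m := by rw [hpred]; rfl
    have hnb : Mo.smul (mpow S.mul b (p - 2)) n = act S Mo b (p - 1) n := by rw [hpred]; rfl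
    refine Prod.ext ?_ ?_
    · show S.dpow (a + b) = (S.dpow a + S.dpow b) + _
      rw [S.dpow_add, add_assoc]
    · show Mo.pmap (m + n) - Mo.smul (mpow S.mul (a + b) (p - 2)) (m + n)
        = (Mo.pmap m - Mo.smul (mpow S.mul a (p - 2)) m)
          + (Mo.pmap n - Mo.smul (mpow S.mul b (p - 2)) n)
          + ∑ i ∈ Finset.Ioo 0 p,
              ((-1 : F) ^ (i + 1) • act S Mo a i (act S Mo b (p - 1 - i) n)
                + (-1 : F) ^ i • act S Mo a (i - 1) (act S Mo b (p - 1 - (i - 1)) m))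
      have hsplit : Mo.smul (mpow S.mul (a + b) (p - 2)) (m + n)
          = act S Mo (a + b) (p - 1) m + act S Mo (a + b) (p - 1) n := by
        rw [map_add, hpred]; rfl
      have hbinm : act S Mo (a + b) (p - 1) m
          = ∑ j ∈ Finset.range p, (-1 : F) ^ j • act S Mo a j (act S Mo b (p - 1 - j) m) := by
        rw [act_binomial, show p - 1 + 1 = p by omega]
        refine Finset.sum_congr rfl fun j hj => ?_
        rw [← Nat.cast_smul_eq_nsmul F, cast_choose_neg_one hp j (Finset.mem_range.mp hj)]
      have hbinn : act S Mo (a + b) (p - 1) n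
          = ∑ j ∈ Finset.range p, (-1 : F) ^ j • act S Mo a j (act S Mo b (p - 1 - j) n) := by
        rw [act_binomial, show p - 1 + 1 = p by omega]
        refine Finset.sum_congr rfl fun j hj => ?_
        rw [← Nat.cast_smul_eq_nsmul F, cast_choose_neg_one hp j (Finset.mem_range.mp hj)]
      have hmsum : ∑ j ∈ Finset.range p, (-1 : F) ^ j • act S Mo a j (act S Mo b (p - 1 - j) m)
          = (∑ j ∈ Finset.range (p - 1),
              (-1 : F) ^ j • act S Mo a j (act S Mo b (p - 1 - j) m))
            + act S Mo a (p - 1) m := by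
        rw [show Finset.range p = Finset.range ((p - 1) + 1) by rw [show p - 1 + 1 = p by omega],
          Finset.sum_range_succ]
        congr 1
        rw [Nat.sub_self, neg_one_pow_pred hp, one_smul]
        rfl
      have hnsum : ∑ j ∈ Finset.range p, (-1 : F) ^ j • act S Mo a j (act S Mo b (p - 1 - j) n)
          = act S Mo b (p - 1) n
            + ∑ i ∈ Finset.Ioo 0 p, (-1 : F) ^ i • act S Mo a i (act S Mo b (p - 1 - i) n) := by
        rw [Finset.range_eq_Ico, Finset.sum_eq_sum_Ico_succ_bot hp.pos, Finset.Ico_add_one_left_eq_Ioo]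
        congr 1
        rw [pow_zero, one_smul]
        rfl
      have hIm : ∑ i ∈ Finset.Ioo 0 p,
            (-1 : F) ^ i • act S Mo a (i - 1) (act S Mo b (p - 1 - (i - 1)) m)
          = - ∑ j ∈ Finset.range (p - 1),
              (-1 : F) ^ j • act S Mo a j (act S Mo b (p - 1 - j) m) := by
        rw [← Finset.Ico_add_one_left_eq_Ioo 0 p, zero_add, Finset.sum_Ico_eq_sum_range, ← Finset.sum_neg_distrib]
        refine Finset.sum_congr rfl fun j hj => ?_
        rw [show 1 + j - 1 = j by omega, pow_add, pow_one, neg_one_mul, neg_smul]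
      have hIn : ∑ i ∈ Finset.Ioo 0 p,
            (-1 : F) ^ (i + 1) • act S Mo a i (act S Mo b (p - 1 - i) n)
          = - ∑ i ∈ Finset.Ioo 0 p,
              (-1 : F) ^ i • act S Mo a i (act S Mo b (p - 1 - i) n) := by
        rw [← Finset.sum_neg_distrib]
        refine Finset.sum_congr rfl fun i _ => ?_
        rw [pow_succ, mul_neg_one, neg_smul]
      rw [Mo.pmap_add, hsplit, hbinm, hbinn]
      rw [hmsum]
      rw [hnsum]
      rw [Finset.sum_add_distrib, hIm, hIn, hma, hnb]
      abel
  · -- dpow_mul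
    intro x y
    obtain ⟨a, m⟩ := x; obtain ⟨b, n⟩ := y
    rw [bmulT_apply]
    have hPa : S.mul (mpow S.mul a (p - 2)) a = mpow S.mul a (p - 1) := by
      rw [hpred]; rfl
    have hab : S.mul (mpow S.mul (S.mul a b) (p - 2)) a = 0 := by
      rw [mpow_mulS, S.mul_assoc, S.mul_comm (mpow S.mul b (p - 2)) a, ← S.mul_assoc,
        hPa, S.pow_p, map_zero, LinearMap.zero_apply]
    have hPb : S.mul (mpow S.mul b (p - 2)) b = mpow S.mul b (p - 1) := by
      rw [hpred]; rfl
    have hba : S.mul (mpow S.mul (S.mul a b) (p - 2)) b = 0 := by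
      rw [mpow_mulS, S.mul_assoc, hPb, S.pow_p]
      exact map_zero (S.mul (mpow S.mul a (p - 2)))
    have h1 : Mo.pmap (Mo.smul a n + Mo.smul b m) = 0 := by
      rw [Mo.pmap_add, Mo.pmap_asmul, Mo.pmap_asmul, add_zero]
    have h2 : Mo.smul (mpow S.mul (S.mul a b) (p - 2)) (Mo.smul a n) = 0 := by
      rw [← Mo.mul_smul, hab, map_zero, LinearMap.zero_apply]
    have h3 : Mo.smul (mpow S.mul (S.mul a b) (p - 2)) (Mo.smul b m) = 0 := by
      rw [← Mo.mul_smul, hba, map_zero, LinearMap.zero_apply]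
    refine Prod.ext (S.dpow_mul a b) ?_
    show Mo.pmap (Mo.smul a n + Mo.smul b m)
        - Mo.smul (mpow S.mul (S.mul a b) (p - 2)) (Mo.smul a n + Mo.smul b m) = (0 : A × M).2
    rw [h1, map_add, h2, h3]
    simp
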